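/- Fix a real parameter q ∈ (0,1]. On the complex vector space with basis B = {γ0, γ1, γ2, γ3, γ4, ρ0, ρ1} define the commutative bilinear multiplication determined by: γ0·x = x for all x ∈ B; γ1·γ1 = γ0; γ2·γ2 = (1/4)·γ0 + (1/4)·γ1 + (1/2)·γ2; γ3·γ3 = γ4·γ4 = (1/9)·γ0 + (2/9)·γ2 + (1/3)·γ3 + (1/3)·γ4; γ1·γ2 = γ2; γ1·γ3 = γ4; γ1·γ4 = γ3; γ2·γ3 = γ2·γ4 = (1/2)·γ3 + (1/2)·γ4; γ3·γ4 = (1/9)·γ1 + (2/9)·γ2 + (1/3)·γ3 + (1/3)·γ4; ρ0·ρ0 = ρ1·ρ1 = (q/12)·γ0 + (q/6)·γ2 + (q/2)·γ3 + (q/4)·γ4 + (1−q)·ρ0; ρ0·ρ1 = (q/12)·γ1 + (q/6)·γ2 + (q/4)·γ3 + (q/2)·γ4 + (1−q)·ρ1; γ1·ρ1 = ρ0; γ1·ρ0 = ρ1; γ2·ρ0 = γ2·ρ1 = (1/2)·ρ0 + (1/2)·ρ1; γ3·ρ0 = γ4·ρ1 = (2/3)·ρ0 + (1/3)·ρ1;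 γ4·ρ0 = γ3·ρ1 = (1/3)·ρ0 + (2/3)·ρ1. Then this multiplication is associative, and B is a finite commutative hypergroup with unit γ0 and identity involution. -/

import Mathlib

namespace Stmt7

inductive B | γ0 | γ1 | γ2 | γ3 | γ4 | ρ0 | ρ1
  deriving DecidableEq

instance : Fintype B :=
  ⟨{.γ0, .γ1, .γ2, .γ3, .γ4, .ρ0, .ρ1}, fun x => by cases x <;> simp⟩

/-- The structure constants of the hypergroup: `c q i j k` is the coefficient of the
basis element `k` in the product `i·j`. -/
noncomputable def c (q : ℝ) : B → B → B → ℝ := fun i j =>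
  match i, j with
  | .γ0, .γ0 => fun k => match k with | .γ0 => 1 | .γ1 => 0 | .γ2 => 0 | .γ3 => 0 | .γ4 => 0 | .ρ0 => 0 | .ρ1 => 0
  | .γ0, .γ1 => fun k => match k with | .γ0 => 0 | .γ1 => 1 | .γ2 => 0 | .γ3 => 0 | .γ4 => 0 | .ρ0 => 0 | .ρ1 => 0
  | .γ0, .γ2 => fun k => match k with | .γ0 => 0 | .γ1 => 0 | .γ2 => 1 | .γ3 => 0 | .γ4 => 0 | .ρ0 => 0 | .ρ1 => 0
  | .γ0, .γ3 => fun k => match k with | .γ0 => 0 | .γ1 => 0 | .γ2 => 0 | .γ3 => 1 | .γ4 => 0 | .ρ0 => 0 | .ρ1 => 0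
  | .γ0, .γ4 => fun k => match k with | .γ0 => 0 | .γ1 => 0 | .γ2 => 0 | .γ3 => 0 | .γ4 => 1 | .ρ0 => 0 | .ρ1 => 0
  | .γ0, .ρ0 => fun k => match k with | .γ0 => 0 | .γ1 => 0 | .γ2 => 0 | .γ3 => 0 | .γ4 => 0 | .ρ0 => 1 | .ρ1 => 0
  | .γ0, .ρ1 => fun k => match k with | .γ0 => 0 | .γ1 => 0 | .γ2 => 0 | .γ3 => 0 | .γ4 => 0 | .ρ0 => 0 | .ρ1 => 1
  | .γ1, .γ0 => fun k => match k with | .γ0 => 0 | .γ1 => 1 | .γ2 => 0 | .γ3 => 0 | .γ4 => 0 | .ρ0 => 0 | .ρ1 => 0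
  | .γ1, .γ1 => fun k => match k with | .γ0 => 1 | .γ1 => 0 | .γ2 => 0 | .γ3 => 0 | .γ4 => 0 | .ρ0 => 0 | .ρ1 => 0
  | .γ1, .γ2 => fun k => match k with | .γ0 => 0 | .γ1 => 0 | .γ2 => 1 | .γ3 => 0 | .γ4 => 0 | .ρ0 => 0 | .ρ1 => 0
  | .γ1, .γ3 => fun k => match k with | .γ0 => 0 | .γ1 => 0 | .γ2 => 0 | .γ3 => 0 | .γ4 => 1 | .ρ0 => 0 | .ρ1 => 0
  | .γ1, .γ4 => fun k => match k with | .γ0 => 0 | .γ1 => 0 | .γ2 => 0 | .γ3 => 1 | .γ4 => 0 | .ρ0 => 0 | .ρ1 => 0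
  | .γ1, .ρ0 => fun k => match k with | .γ0 => 0 | .γ1 => 0 | .γ2 => 0 | .γ3 => 0 | .γ4 => 0 | .ρ0 => 0 | .ρ1 => 1
  | .γ1, .ρ1 => fun k => match k with | .γ0 => 0 | .γ1 => 0 | .γ2 => 0 | .γ3 => 0 | .γ4 => 0 | .ρ0 => 1 | .ρ1 => 0
  | .γ2, .γ0 => fun k => match k with | .γ0 => 0 | .γ1 => 0 | .γ2 => 1 | .γ3 => 0 | .γ4 => 0 | .ρ0 => 0 | .ρ1 => 0
  | .γ2, .γ1 => fun k => match k with | .γ0 => 0 | .γ1 => 0 | .γ2 => 1 | .γ3 => 0 | .γ4 => 0 | .ρ0 => 0 | .ρ1 => 0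
  | .γ2, .γ2 => fun k => match k with | .γ0 => 1 / 4 | .γ1 => 1 / 4 | .γ2 => 1 / 2 | .γ3 => 0 | .γ4 => 0 | .ρ0 => 0 | .ρ1 => 0
  | .γ2, .γ3 => fun k => match k with | .γ0 => 0 | .γ1 => 0 | .γ2 => 0 | .γ3 => 1 / 2 | .γ4 => 1 / 2 | .ρ0 => 0 | .ρ1 => 0
  | .γ2, .γ4 => fun k => match k with | .γ0 => 0 | .γ1 => 0 | .γ2 => 0 | .γ3 => 1 / 2 | .γ4 => 1 / 2 | .ρ0 => 0 | .ρ1 => 0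
  | .γ2, .ρ0 => fun k => match k with | .γ0 => 0 | .γ1 => 0 | .γ2 => 0 | .γ3 => 0 | .γ4 => 0 | .ρ0 => 1 / 2 | .ρ1 => 1 / 2
  | .γ2, .ρ1 => fun k => match k with | .γ0 => 0 | .γ1 => 0 | .γ2 => 0 | .γ3 => 0 | .γ4 => 0 | .ρ0 => 1 / 2 | .ρ1 => 1 / 2
  | .γ3, .γ0 => fun k => match k with | .γ0 => 0 | .γ1 => 0 | .γ2 => 0 | .γ3 => 1 | .γ4 => 0 | .ρ0 => 0 | .ρ1 => 0
  | .γ3, .γ1 => fun k => match k with | .γ0 => 0 | .γ1 => 0 | .γ2 => 0 | .γ3 => 0 | .γ4 => 1 | .ρ0 => 0 | .ρ1 => 0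
  | .γ3, .γ2 => fun k => match k with | .γ0 => 0 | .γ1 => 0 | .γ2 => 0 | .γ3 => 1 / 2 | .γ4 => 1 / 2 | .ρ0 => 0 | .ρ1 => 0
  | .γ3, .γ3 => fun k => match k with | .γ0 => 1 / 9 | .γ1 => 0 | .γ2 => 2 / 9 | .γ3 => 1 / 3 | .γ4 => 1 / 3 | .ρ0 => 0 | .ρ1 => 0
  | .γ3, .γ4 => fun k => match k with | .γ0 => 0 | .γ1 => 1 / 9 | .γ2 => 2 / 9 | .γ3 => 1 / 3 | .γ4 => 1 / 3 | .ρ0 => 0 | .ρ1 => 0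
  | .γ3, .ρ0 => fun k => match k with | .γ0 => 0 | .γ1 => 0 | .γ2 => 0 | .γ3 => 0 | .γ4 => 0 | .ρ0 => 2 / 3 | .ρ1 => 1 / 3
  | .γ3, .ρ1 => fun k => match k with | .γ0 => 0 | .γ1 => 0 | .γ2 => 0 | .γ3 => 0 | .γ4 => 0 | .ρ0 => 1 / 3 | .ρ1 => 2 / 3
  | .γ4, .γ0 => fun k => match k with | .γ0 => 0 | .γ1 => 0 | .γ2 => 0 | .γ3 => 0 | .γ4 => 1 | .ρ0 => 0 | .ρ1 => 0
  | .γ4, .γ1 => fun k => match k with | .γ0 => 0 | .γ1 => 0 | .γ2 => 0 | .γ3 => 1 | .γ4 => 0 | .ρ0 => 0 | .ρ1 => 0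
  | .γ4, .γ2 => fun k => match k with | .γ0 => 0 | .γ1 => 0 | .γ2 => 0 | .γ3 => 1 / 2 | .γ4 => 1 / 2 | .ρ0 => 0 | .ρ1 => 0
  | .γ4, .γ3 => fun k => match k with | .γ0 => 0 | .γ1 => 1 / 9 | .γ2 => 2 / 9 | .γ3 => 1 / 3 | .γ4 => 1 / 3 | .ρ0 => 0 | .ρ1 => 0
  | .γ4, .γ4 => fun k => match k with | .γ0 => 1 / 9 | .γ1 => 0 | .γ2 => 2 / 9 | .γ3 => 1 / 3 | .γ4 => 1 / 3 | .ρ0 => 0 | .ρ1 => 0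
  | .γ4, .ρ0 => fun k => match k with | .γ0 => 0 | .γ1 => 0 | .γ2 => 0 | .γ3 => 0 | .γ4 => 0 | .ρ0 => 1 / 3 | .ρ1 => 2 / 3
  | .γ4, .ρ1 => fun k => match k with | .γ0 => 0 | .γ1 => 0 | .γ2 => 0 | .γ3 => 0 | .γ4 => 0 | .ρ0 => 2 / 3 | .ρ1 => 1 / 3
  | .ρ0, .γ0 => fun k => match k with | .γ0 => 0 | .γ1 => 0 | .γ2 => 0 | .γ3 => 0 | .γ4 => 0 | .ρ0 => 1 | .ρ1 => 0
  | .ρ0, .γ1 => fun k => match k with | .γ0 => 0 | .γ1 => 0 | .γ2 => 0 | .γ3 => 0 | .γ4 => 0 | .ρ0 => 0 | .ρ1 => 1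
  | .ρ0, .γ2 => fun k => match k with | .γ0 => 0 | .γ1 => 0 | .γ2 => 0 | .γ3 => 0 | .γ4 => 0 | .ρ0 => 1 / 2 | .ρ1 => 1 / 2
  | .ρ0, .γ3 => fun k => match k with | .γ0 => 0 | .γ1 => 0 | .γ2 => 0 | .γ3 => 0 | .γ4 => 0 | .ρ0 => 2 / 3 | .ρ1 => 1 / 3
  | .ρ0, .γ4 => fun k => match k with | .γ0 => 0 | .γ1 => 0 | .γ2 => 0 | .γ3 => 0 | .γ4 => 0 | .ρ0 => 1 / 3 | .ρ1 => 2 / 3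
  | .ρ0, .ρ0 => fun k => match k with | .γ0 => q / 12 | .γ1 => 0 | .γ2 => q / 6 | .γ3 => q / 2 | .γ4 => q / 4 | .ρ0 => 1 - q | .ρ1 => 0
  | .ρ0, .ρ1 => fun k => match k with | .γ0 => 0 | .γ1 => q / 12 | .γ2 => q / 6 | .γ3 => q / 4 | .γ4 => q / 2 | .ρ0 => 0 | .ρ1 => 1 - q
  | .ρ1, .γ0 => fun k => match k with | .γ0 => 0 | .γ1 => 0 | .γ2 => 0 | .γ3 => 0 | .γ4 => 0 | .ρ0 => 0 | .ρ1 => 1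
  | .ρ1, .γ1 => fun k => match k with | .γ0 => 0 | .γ1 => 0 | .γ2 => 0 | .γ3 => 0 | .γ4 => 0 | .ρ0 => 1 | .ρ1 => 0
  | .ρ1, .γ2 => fun k => match k with | .γ0 => 0 | .γ1 => 0 | .γ2 => 0 | .γ3 => 0 | .γ4 => 0 | .ρ0 => 1 / 2 | .ρ1 => 1 / 2
  | .ρ1, .γ3 => fun k => match k with | .γ0 => 0 | .γ1 => 0 | .γ2 => 0 | .γ3 => 0 | .γ4 => 0 | .ρ0 => 1 / 3 | .ρ1 => 2 / 3
  | .ρ1, .γ4 => fun k => match k with | .γ0 => 0 | .γ1 => 0 | .γ2 => 0 | .γ3 => 0 | .γ4 => 0 | .ρ0 => 2 / 3 | .ρ1 => 1 / 3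
  | .ρ1, .ρ0 => fun k => match k with | .γ0 => 0 | .γ1 => q / 12 | .γ2 => q / 6 | .γ3 => q / 4 | .γ4 => q / 2 | .ρ0 => 0 | .ρ1 => 1 - q
  | .ρ1, .ρ1 => fun k => match k with | .γ0 => q / 12 | .γ1 => 0 | .γ2 => q / 6 | .γ3 => q / 2 | .γ4 => q / 4 | .ρ0 => 1 - q | .ρ1 => 0

/-- The bilinear multiplication on the complex vector space with basis `B`. -/
noncomputable def mul (q : ℝ) (f g : B → ℂ) : B → ℂ :=
  fun k => ∑ i : B, ∑ j : B, f i * g j * (c q i j k : ℂ)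

/-- The basis vector attached to `b : B`. -/
def bas (b : B) : B → ℂ := fun k => if k = b then 1 else 0

/-- The involution of the hypergroup. -/
def inv : B → B := fun b => b

theorem univB : (Finset.univ : Finset B) = {.γ0, .γ1, .γ2, .γ3, .γ4, .ρ0, .ρ1} := by
  decide

theorem sumB {M : Type*} [AddCommMonoid M] (f : B → M) :
    ∑ x : B, f x = f .γ0 + f .γ1 + f .γ2 + f .γ3 + f .γ4 + f .ρ0 + f .ρ1 := by
  rw [univB]
  simp [Finset.sum_insert, add_assoc]

theorem c_symm (q : ℝ) (i j : B) : c q i j = c q j i := by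
  cases i <;> cases j <;> rfl

set_option maxHeartbeats 4000000 in
theorem mul_assoc' (q : ℝ) (f g h : B → ℂ) :
    mul q (mul q f g) h = mul q f (mul q g h) := by
  funext k
  cases k <;> (simp only [mul, sumB, c]; push_cast; ring)

set_option maxHeartbeats 4000000 in
theorem hypergroup_axioms (q : ℝ) (hq : 0 < q) (hq1 : q ≤ 1) :
    (∀ f g h : B → ℂ, mul q (mul q f g) h = mul q f (mul q g h)) ∧
    (∀ f g : B → ℂ, mul q f g = mul q g f) ∧
    (∀ b : B, mul q (bas B.γ0) (bas b) = bas b) ∧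
    (∀ i j k : B, 0 ≤ c q i j k) ∧
    (∀ i j : B, ∑ k : B, c q i j k = 1) ∧
    (∀ i j : B, 0 < c q i j B.γ0 ↔ j = inv i) := by
  refine ⟨mul_assoc' q, ?_, ?_, ?_, ?_, ?_⟩
  · intro f g
    funext k
    simp only [mul]
    rw [Finset.sum_comm]
    refine Finset.sum_congr rfl fun j _ => Finset.sum_congr rfl fun i _ => ?_
    rw [c_symm]; ring
  · intro b
    funext k
    cases b <;> cases k <;> simp [mul, sumB, bas, c]
  · intro i j k
    cases i <;> cases j <;> cases k <;> simp only [c] <;> linarith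
  · intro i j
    cases i <;> cases j <;> rw [sumB] <;> simp only [c] <;> linarith
  · intro i j
    cases i <;> cases j <;> simp only [c, inv] <;> norm_num <;> first | linarith | decide

end Stmt7
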